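/- Let g = n ⋊_B ℝe be the Lie algebra built on ℝe₁ ⊕ k ⊕ ℝe, where [Y,Z] = -η(Y,Z)e₁ for Y,Z ∈ k, [e, e₁] = a·e₁, [e, X] = β(X)e₁ + A(X) for X ∈ k (B assumed a derivation of n), with η ≠ 0. Let J be an almost complex structure on g with J e₁ = e, J(k) = k. Then the Nijenhuis tensor of J vanishes if and only if: A commutes with J restricted to k, β = 0, and η(JX, JY) = η(X,Y) for all X,Y ∈ k. -/
import Mathlib


/-- Integrability of an almost complex structure `J` with `J e₁ = e`, `J(k) = k`
on `g = n ⋊_B ℝe` is equivalent to `[A, J|_k] = 0`, `β = 0`, and `η` of type (1,1). -/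
theorem stmt_1 {k : Type*} [AddCommGroup k] [Module ℝ k] [FiniteDimensional ℝ k]
    (η : k →ₗ[ℝ] k →ₗ[ℝ] ℝ) (hη_alt : ∀ X Y : k, η X Y = - η Y X) (hη_ne : η ≠ 0)
    (a : ℝ) (β : k →ₗ[ℝ] ℝ) (A : k →ₗ[ℝ] k)
    (hder : ∀ X Y : k, η (A X) Y + η X (A Y) = a * η X Y)
    (br : (ℝ × k × ℝ) → (ℝ × k × ℝ) → (ℝ × k × ℝ))
    (hbr : ∀ P Q : ℝ × k × ℝ, br P Q =
      (P.2.2 * (a * Q.1 + β Q.2.1) - Q.2.2 * (a * P.1 + β P.2.1) - η P.2.1 Q.2.1,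
       P.2.2 • A Q.2.1 - Q.2.2 • A P.2.1, 0))
    (J : (ℝ × k × ℝ) →ₗ[ℝ] (ℝ × k × ℝ))
    (hJ2 : ∀ P, J (J P) = -P)
    (hJe1 : J (1, 0, 0) = (0, 0, 1))
    (Jk : k →ₗ[ℝ] k)
    (hJk : ∀ X : k, J (0, X, 0) = (0, Jk X, 0)) :
    (∀ P Q : ℝ × k × ℝ,
        br (J P) (J Q) - J (br (J P) Q) - J (br P (J Q)) - br P Q = 0) ↔
      ((∀ X : k, A (Jk X) = Jk (A X)) ∧ β = 0 ∧
        ∀ X Y : k, η (Jk X) (Jk Y) = η X Y) := by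
  -- J (0,0,1) = (-1,0,0)
  have hJ001 : J (0, 0, 1) = (-1, 0, 0) := by
    have h := hJ2 (1, 0, 0)
    rw [hJe1] at h
    rw [h]
    simp [Prod.ext_iff]
  -- general formula for J
  have hJgen : ∀ P : ℝ × k × ℝ, J P = (-P.2.2, Jk P.2.1, P.1) := by
    intro P
    have hd : P = P.1 • ((1:ℝ), (0:k), (0:ℝ)) + ((0:ℝ), P.2.1, (0:ℝ))
        + P.2.2 • ((0:ℝ), (0:k), (1:ℝ)) := by
      simp [Prod.ext_iff, Prod.smul_def]
    rw [hd, map_add, map_add, map_smul, map_smul, hJe1, hJk, hJ001]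
    simp [Prod.ext_iff, Prod.smul_def]
  have hJk2 : ∀ X : k, Jk (Jk X) = -X := by
    intro X
    have h := hJ2 (0, X, 0)
    rw [hJk, hJk] at h
    have := congrArg (fun P : ℝ × k × ℝ => P.2.1) h
    simpa using this
  constructor
  · intro h
    have h10 : ∀ Y : k, br (J (1,0,0)) (J (0,Y,0)) - J (br (J (1,0,0)) (0,Y,0))
        - J (br (1,0,0) (J (0,Y,0))) - br (1,0,0) (0,Y,0) = 0 := fun Y => h _ _
    have hkk : ∀ X Y : k, br (J (0,X,0)) (J (0,Y,0)) - J (br (J (0,X,0)) (0,Y,0))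
        - J (br (0,X,0) (J (0,Y,0))) - br (0,X,0) (0,Y,0) = 0 := fun X Y => h _ _
    refine ⟨?_, ?_, ?_⟩
    · intro Y
      have h1 := h10 Y
      simp only [hJgen, hbr] at h1
      have := congrArg (fun P : ℝ × k × ℝ => P.2.1) h1
      simp at this
      linear_combination (norm := module) this
    · -- β = 0
      have hβJ : ∀ Z : k, β (Jk Z) = 0 := by
        intro Z
        have h1 := h10 Z
        simp only [hJgen, hbr] at h1
        have := congrArg (fun P : ℝ × k × ℝ => P.1) h1
        simpa using this
      apply LinearMap.ext
      intro Y
      have := hβJ (Jk Y)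
      rw [hJk2] at this
      simpa using this
    · intro X Y
      have h1 := hkk X Y
      simp only [hJgen, hbr] at h1
      have := congrArg (fun P : ℝ × k × ℝ => P.1) h1
      simp at this
      linarith [this]
  · rintro ⟨hA, hβ, hη11⟩
    have hβz : ∀ Z : k, β Z = 0 := by intro Z; rw [hβ]; simp
    have haux : ∀ X Y : k, η (Jk X) Y = - η X (Jk Y) := by
      intro X Y
      have h1 := hη11 X (Jk Y)
      rw [hJk2] at h1
      simp at h1
      linarith [h1]
    intro P Q
    rw [hJgen P, hJgen Q, hbr, hbr, hbr, hbr, hJgen, hJgen]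
    simp only [Prod.ext_iff, Prod.fst_zero, Prod.snd_zero, Prod.sub_def, hβz]
    refine ⟨?_, ?_, ?_⟩
    · simp only [hη11]
      ring
    · simp only [map_sub, map_smul, hA, hJk2]
      module
    · simp only [haux]
      ring
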